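/- Let Y be a subgroup of ℚ and let f_1, f_2, f_3 be normalized positive definite functions on Y satisfying equation (S-D T): f_1(u_1+u_2+u_3)·f_2(u_1−u_2−u_3)·f_3(u_1+u_2−u_3) = f_1(u_1)f_1(u_2)f_1(u_3)·f_2(u_1)f_2(−u_2)f_2(−u_3)·f_3(u_1)f_3(u_2)f_3(−u_3) for all u_1, u_2, u_3 ∈ Y. Then the set N = {y ∈ Y : f_1(y)·f_2(y)·f_3(y) ≠ 0} is a subgroup of Y, and moreover for every y ∈ Y, if 2y ∈ N then y ∈ N. -/
import Mathlib


/-- `f : Y → ℂ` is a positive definite function on the abelian group `Y`. -/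
def IsPosDefFn {Y : Type*} [AddCommGroup Y] (f : Y → ℂ) : Prop :=
  ∀ (n : ℕ) (y : Fin n → Y) (c : Fin n → ℂ),
    0 ≤ (∑ i, ∑ j, f (y i - y j) * c i * (starRingEnd ℂ) (c j)).re ∧
    (∑ i, ∑ j, f (y i - y j) * c i * (starRingEnd ℂ) (c j)).im = 0

/-- Equation (S-D T) for functions `f₁, f₂, f₃` on an abelian group. -/
def SDTEq {Y : Type*} [AddCommGroup Y] (f₁ f₂ f₃ : Y → ℂ) : Prop :=
  ∀ u₁ u₂ u₃ : Y,
    f₁ (u₁ + u₂ + u₃) * f₂ (u₁ - u₂ - u₃) * f₃ (u₁ + u₂ - u₃) =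
      f₁ u₁ * f₁ u₂ * f₁ u₃ * (f₂ u₁ * f₂ (-u₂) * f₂ (-u₃)) *
        (f₃ u₁ * f₃ u₂ * f₃ (-u₃))

lemma posdef_conj {Y : Type*} [AddCommGroup Y] {f : Y → ℂ} (h : IsPosDefFn f)
    (hn : f 0 = 1) (x : Y) : f (-x) = (starRingEnd ℂ) (f x) := by
  have h1 := (h 2 ![x, 0] ![1, 1]).2
  have h2 := (h 2 ![x, 0] ![Complex.I, 1]).2
  simp [Fin.sum_univ_two, hn, Complex.ext_iff, Complex.add_im, Complex.mul_im] at h1 h2 ⊢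
  constructor <;> nlinarith [h1, h2]

/-- Let `Y` be a subgroup of `ℚ` and `f₁, f₂, f₃` normalized positive definite
functions on `Y` satisfying equation (S-D T). Then
`N = {y : f₁(y)f₂(y)f₃(y) ≠ 0}` is a subgroup of `Y`, and `2y ∈ N` implies
`y ∈ N`. -/
theorem SDT_nonvanishing_set_is_subgroup
    (Y : AddSubgroup ℚ)
    (f₁ f₂ f₃ : ↥Y → ℂ)
    (hpd₁ : IsPosDefFn f₁) (hpd₂ : IsPosDefFn f₂) (hpd₃ : IsPosDefFn f₃)
    (hn₁ : f₁ 0 = 1) (hn₂ : f₂ 0 = 1) (hn₃ : f₃ 0 = 1)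
    (heq : SDTEq f₁ f₂ f₃) :
    (∃ N : AddSubgroup ↥Y, (N : Set ↥Y) = {y : ↥Y | f₁ y * f₂ y * f₃ y ≠ 0}) ∧
      ∀ y : ↥Y, f₁ (2 • y) * f₂ (2 • y) * f₃ (2 • y) ≠ 0 →
        f₁ y * f₂ y * f₃ y ≠ 0 := by
  have hc₁ := posdef_conj hpd₁ hn₁
  have hc₂ := posdef_conj hpd₂ hn₂
  have hc₃ := posdef_conj hpd₃ hn₃
  have h0 : (0:↥Y) ∈ {y : ↥Y | f₁ y * f₂ y * f₃ y ≠ 0} := by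
    simp [Set.mem_setOf_eq, hn₁, hn₂, hn₃]
  have hadd : ∀ x y : ↥Y, x ∈ {y : ↥Y | f₁ y * f₂ y * f₃ y ≠ 0} →
      y ∈ {y : ↥Y | f₁ y * f₂ y * f₃ y ≠ 0} →
      x + y ∈ {y : ↥Y | f₁ y * f₂ y * f₃ y ≠ 0} := by
    intro x y hx hy
    simp only [Set.mem_setOf_eq, mul_ne_zero_iff] at hx hy ⊢
    obtain ⟨⟨hx1, hx2⟩, hx3⟩ := hx
    obtain ⟨⟨hy1, hy2⟩, hy3⟩ := hy
    have e1 := heq x y 0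
    have e2 := heq x 0 (-y)
    simp only [add_zero, sub_zero, neg_zero, neg_neg, sub_neg_eq_add, hn₁, hn₂, hn₃,
      hc₁, hc₂, hc₃, mul_one, one_mul] at e1 e2
    have r1 : f₁ (x + y) * f₂ (x - y) * f₃ (x + y) ≠ 0 := by
      rw [e1]
      simp only [ne_eq, mul_eq_zero, map_eq_zero, not_or]
      tauto
    have r2 : f₁ (x + -y) * f₂ (x + y) * f₃ (x + y) ≠ 0 := by
      rw [e2]
      simp only [ne_eq, mul_eq_zero, map_eq_zero, not_or]
      tauto
    simp only [ne_eq, mul_eq_zero, not_or] at r1 r2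
    tauto
  have hneg : ∀ y : ↥Y, y ∈ {y : ↥Y | f₁ y * f₂ y * f₃ y ≠ 0} →
      -y ∈ {y : ↥Y | f₁ y * f₂ y * f₃ y ≠ 0} := by
    intro y hy
    simp only [Set.mem_setOf_eq, mul_ne_zero_iff] at hy ⊢
    simp only [hc₁, hc₂, hc₃, map_ne_zero]
    tauto
  constructor
  · exact ⟨⟨⟨⟨_, fun {a b} ha hb => hadd a b ha hb⟩, h0⟩,
      fun {a} ha => hneg a ha⟩, rfl⟩
  · intro y hy
    have e := heq y y 0
    simp only [add_zero, sub_zero, sub_self, neg_zero, hn₁, hn₂, hn₃, mul_one, hc₂] at e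
    have h2 : 2 • y = y + y := two_nsmul y
    rw [h2] at hy
    simp only [ne_eq, mul_eq_zero, not_or] at hy
    have hz : f₁ (y + y) * f₃ (y + y) ≠ 0 := mul_ne_zero hy.1.1 hy.2
    rw [e] at hz
    simp only [ne_eq, mul_eq_zero, map_eq_zero, not_or] at hz
    simp only [ne_eq, mul_eq_zero, not_or]
    tauto
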